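/- Let L be a finite meet-semilattice, G a building set of L, x ∈ L \ {0̂}, and F(x) = {x₁,…,x_k} the set of factors of x in G. Then for every y ∈ G with 0̂ ≠ y ≤ x there exists a unique index j ∈ {1,…,k} such that y ≤ x_j; that is, F(x) induces a partition of G_{≤x}. -/

import Mathlib

attribute [local instance] Classical.propDecidable

universe u

/-- The set of maximal elements of `G` below `x`. -/
def maxBelow {L : Type u} [PartialOrder L] (G : Set L) (x : L) : Set L :=
  {g | g ∈ G ∧ g ≤ x ∧ ∀ h ∈ G, h ≤ x → g ≤ h → h = g}

/-- The tuple in the product of lower intervals which is `g` in the coordinate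
indexed by `g` and bottom elsewhere. -/
noncomputable def deltaTuple {L : Type u} [PartialOrder L] [OrderBot L] (G : Set L) (x : L)
    (g : maxBelow G x) : (h : maxBelow G x) → Set.Iic (h : L) :=
  fun h => if (h : L) = (g : L) then ⟨(h : L), le_refl _⟩ else ⟨⊥, bot_le⟩

/-- `G` is a (combinatorial) building set: `G` avoids the bottom element, and for every
`x ≠ ⊥` the interval `[⊥, x]` decomposes as the product of the intervals below the maximal
elements of `G` below `x`, via an isomorphism sending delta tuples to the corresponding
maximal elements. -/
def IsBuilding {L : Type u} [PartialOrder L] [OrderBot L] (G : Set L) : Prop :=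
  (∀ g ∈ G, g ≠ ⊥) ∧
  ∀ x : L, x ≠ ⊥ →
    ∃ φ : ((h : maxBelow G x) → Set.Iic (h : L)) ≃o Set.Iic x,
      ∀ g : maxBelow G x, ((φ (deltaTuple G x g) : Set.Iic x) : L) = (g : L)

/-- the factors of `x` in a building set partition the elements of `G`
below `x`: every `⊥ ≠ y ∈ G` with `y ≤ x` lies below a unique factor. -/
theorem factors_partition_building_set_below {L : Type u} [SemilatticeInf L] [Fintype L]
    [OrderBot L] (G : Set L) (hG : IsBuilding G) (x : L) (hx : x ≠ ⊥) :
    ∀ y ∈ G, y ≠ ⊥ → y ≤ x → ∃! g : L, g ∈ maxBelow G x ∧ y ≤ g := by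
  intro y hyG hy0 hyx
  -- Existence: pick a maximal element of {h ∈ G | h ≤ x ∧ y ≤ h}
  have hS : ({h | h ∈ G ∧ h ≤ x ∧ y ≤ h} : Set L).Finite := Set.toFinite _
  obtain ⟨m, hmS, hmmax⟩ := hS.exists_maximalFor id _ ⟨y, hyG, hyx, le_refl y⟩
  obtain ⟨hmG, hmx, hym⟩ := hmS
  have hmMax : m ∈ maxBelow G x := by
    refine ⟨hmG, hmx, fun h hhG hhx hmh => ?_⟩
    exact le_antisymm (hmmax ⟨hhG, hhx, hym.trans hmh⟩ hmh) hmh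
  refine ⟨m, ⟨hmMax, hym⟩, ?_⟩
  -- Uniqueness
  rintro g ⟨hgMax, hyg⟩
  by_contra hne
  obtain ⟨φ, hφ⟩ := hG.2 x hx
  set a := φ.symm ⟨y, hyx⟩ with ha
  have key : ∀ g' : maxBelow G x, y ≤ (g' : L) →
      ∀ h : maxBelow G x, (h : L) ≠ (g' : L) → ((a h : L)) = ⊥ := by
    intro g' hyg' h hh
    have h1 : (⟨y, hyx⟩ : Set.Iic x) ≤ φ (deltaTuple G x g') := by
      rw [← Subtype.coe_le_coe, hφ g']; exact hyg'
    have h2 : a ≤ deltaTuple G x g' := by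
      have := φ.symm.monotone h1
      simpa [ha] using this
    have h3 := h2 h
    simp only [deltaTuple, if_neg hh] at h3
    exact le_antisymm (Subtype.coe_le_coe.2 h3) bot_le
  have hall : ∀ h : maxBelow G x, ((a h : L)) = ⊥ := by
    intro h
    by_cases h1 : (h : L) = (g : L)
    · refine key ⟨m, hmMax⟩ hym h ?_
      intro h2
      exact hne (h1.symm.trans h2)
    · exact key ⟨g, hgMax⟩ hyg h h1
  -- a is below the preimage of bottom, hence y ≤ ⊥
  have h4 : a ≤ φ.symm ⟨⊥, bot_le⟩ := by
    intro h
    rw [← Subtype.coe_le_coe, hall h]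
    exact bot_le
  have h5 : (⟨y, hyx⟩ : Set.Iic x) ≤ ⟨⊥, bot_le⟩ := by
    have := φ.monotone h4
    simpa [ha] using this
  exact hy0 (le_antisymm (Subtype.coe_le_coe.2 h5) bot_le)
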